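/- Let G = {1, σ} be a group of order 2 acting on the Klein four-group V = {1, a, b, c} by σ·a = a, σ·b = c, σ·c = b. Then H^1(G, V) = 0. -/

import Mathlib

/-- The nontrivial automorphism of the Klein four group `V = ℤ/2 × ℤ/2` fixing
`a = (1,0)` and swapping `b = (0,1)` and `c = (1,1)`. -/
def kleinSigma : ZMod 2 × ZMod 2 → ZMod 2 × ZMod 2 :=
  fun v => (v.1 + v.2, v.2)

/-- The action of `G = ℤ/2` on the Klein four group: the identity acts trivially
and the nontrivial element acts by `kleinSigma`. -/
def kleinAct : ZMod 2 → ZMod 2 × ZMod 2 → ZMod 2 × ZMod 2 :=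
  fun g v => if g = 0 then v else kleinSigma v

/-- For `G` of order 2 acting on the Klein four group `V` by fixing `a` and
swapping `b` and `c`, `H¹(G, V) = 0`: every crossed homomorphism is principal. -/
theorem h1_klein_swap_action_trivial
    (f : ZMod 2 → ZMod 2 × ZMod 2)
    (hf : ∀ g h : ZMod 2, f (g + h) = kleinAct g (f h) + f g) :
    ∃ v : ZMod 2 × ZMod 2, ∀ g : ZMod 2, f g = kleinAct g v - v := by
  have h0 : f 0 = 0 := by
    simpa [kleinAct] using hf 0 0
  have h2 : (f 1).2 = 0 := by
    have h := hf 1 1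
    have : (1 : ZMod 2) + 1 = 0 := by decide
    rw [this, h0] at h
    have h' := congrArg Prod.fst h
    simp [kleinAct, kleinSigma] at h'
    have e : (f 1).1 + (f 1).2 + (f 1).1 = (f 1).2 := by
      rw [add_comm (f 1).1 (f 1).2, add_assoc, CharTwo.add_self_eq_zero, add_zero]
    rw [← e, ← h']
  refine ⟨(0, (f 1).1), fun g => ?_⟩
  fin_cases g
  · show f 0 = kleinAct 0 (0, (f 1).1) - (0, (f 1).1)
    simpa [kleinAct] using h0
  · show f 1 = kleinAct 1 (0, (f 1).1) - (0, (f 1).1)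
    simp [kleinAct, kleinSigma]
    ext
    · simp
    · simp [h2]
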